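/- Let r, s ∈ (1, ∞) be real numbers and let D : 𝒜 → 𝒜 be a mapping such that D(sa) = sD(a) for all a ∈ 𝒜. Suppose there exists a function φ : 𝒜 × 𝒜 × 𝒜 → [0, ∞) such that lim_{n→∞} s^{−n} φ(s^n a, s^n b, s^n c) = 0 for all a, b, c ∈ 𝒜, and ‖r μ D((a+b)/r) + r μ D((a−b)/r) − 2 D(μ a) + D(c c* c) − D(c) c* c − c (D(c))* c − c c* D(c)‖ ≤ φ(a, b, c) for all μ ∈ 𝕋 and all a, b, c ∈ 𝒜. Then D is a J*-derivation on 𝒜. -/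

import Mathlib

open ContinuousLinearMap Filter

variable {H K : Type*} [NormedAddCommGroup H] [InnerProductSpace ℂ H] [CompleteSpace H]
  [NormedAddCommGroup K] [InnerProductSpace ℂ K] [CompleteSpace K]

/-- `𝒜` is closed under the `J*`-triple product `x ↦ x x* x`. -/
def JStarClosed (𝒜 : Submodule ℂ (H →L[ℂ] K)) : Prop :=
  ∀ x : H →L[ℂ] K, x ∈ 𝒜 → (x ∘L adjoint x) ∘L x ∈ 𝒜

/-- The triple product `c c* c` as an element of `𝒜`. -/
noncomputable def cube (𝒜 : Submodule ℂ (H →L[ℂ] K)) (hA : JStarClosed 𝒜) (c : 𝒜) : 𝒜 :=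
  ⟨((c : H →L[ℂ] K) ∘L adjoint (c : H →L[ℂ] K)) ∘L (c : H →L[ℂ] K), hA c c.2⟩

/-- `D : 𝒜 → 𝒜` is a `J*`-derivation: it is `ℂ`-linear and satisfies
`D(c c* c) = D(c) c* c + c (D(c))* c + c c* D(c)`. -/
noncomputable def IsJStarDerivation (𝒜 : Submodule ℂ (H →L[ℂ] K)) (hA : JStarClosed 𝒜)
    (D : 𝒜 → 𝒜) : Prop :=
  (∀ a b : 𝒜, D (a + b) = D a + D b) ∧
  (∀ (z : ℂ) (a : 𝒜), D (z • a) = z • D a) ∧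
  (∀ c : 𝒜, (D (cube 𝒜 hA c) : H →L[ℂ] K) =
      ((D c : H →L[ℂ] K) ∘L adjoint (c : H →L[ℂ] K)) ∘L (c : H →L[ℂ] K) +
      ((c : H →L[ℂ] K) ∘L adjoint (D c : H →L[ℂ] K)) ∘L (c : H →L[ℂ] K) +
      ((c : H →L[ℂ] K) ∘L adjoint (c : H →L[ℂ] K)) ∘L (D c : H →L[ℂ] K))

/-- The defect of the generalized Jensen functional equation combined with the
`J*`-derivation identity, for a map `f : 𝒜 → 𝒜`, parameter `r` and scalar `μ`. -/
noncomputable def jensenDefect (𝒜 : Submodule ℂ (H →L[ℂ] K)) (hA : JStarClosed 𝒜)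
    (r : ℝ) (f : 𝒜 → 𝒜) (μ : ℂ) (a b c : 𝒜) : H →L[ℂ] K :=
  ((r : ℂ) * μ) • (f ((r : ℂ)⁻¹ • (a + b)) : H →L[ℂ] K) +
  ((r : ℂ) * μ) • (f ((r : ℂ)⁻¹ • (a - b)) : H →L[ℂ] K) -
  (2 : ℂ) • (f (μ • a) : H →L[ℂ] K) +
  (f (cube 𝒜 hA c) : H →L[ℂ] K) -
  ((f c : H →L[ℂ] K) ∘L adjoint (c : H →L[ℂ] K)) ∘L (c : H →L[ℂ] K) -
  ((c : H →L[ℂ] K) ∘L adjoint (f c : H →L[ℂ] K)) ∘L (c : H →L[ℂ] K) -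
  ((c : H →L[ℂ] K) ∘L adjoint (c : H →L[ℂ] K)) ∘L (f c : H →L[ℂ] K)

lemma cube_smul' (𝒜 : Submodule ℂ (H →L[ℂ] K)) (hA : JStarClosed 𝒜) (z : ℂ)
    (hz : starRingEnd ℂ z = z) (c : 𝒜) :
    cube 𝒜 hA (z • c) = (z ^ 3) • cube 𝒜 hA c := by
  apply Subtype.ext
  show (((z • c : 𝒜) : H →L[ℂ] K) ∘L adjoint ((z • c : 𝒜) : H →L[ℂ] K)) ∘L ((z • c : 𝒜) : H →L[ℂ] K)
      = z ^ 3 • (((c : H →L[ℂ] K) ∘L adjoint (c : H →L[ℂ] K)) ∘L (c : H →L[ℂ] K))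
  rw [Submodule.coe_smul, LinearIsometryEquiv.map_smulₛₗ adjoint, hz]
  simp only [smul_comp, comp_smul, smul_smul]
  ring_nf

lemma cube_zero' (𝒜 : Submodule ℂ (H →L[ℂ] K)) (hA : JStarClosed 𝒜) :
    cube 𝒜 hA 0 = 0 := by
  apply Subtype.ext
  show (((0:𝒜) : H →L[ℂ] K) ∘L adjoint ((0:𝒜) : H →L[ℂ] K)) ∘L ((0:𝒜) : H →L[ℂ] K) = 0
  simp

/-- Jensen part of the defect. -/
noncomputable def Jaux (𝒜 : Submodule ℂ (H →L[ℂ] K)) (r : ℝ) (D : 𝒜 → 𝒜) (μ : ℂ)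
    (a b : 𝒜) : H →L[ℂ] K :=
  ((r : ℂ) * μ) • (D ((r : ℂ)⁻¹ • (a + b)) : H →L[ℂ] K) +
  ((r : ℂ) * μ) • (D ((r : ℂ)⁻¹ • (a - b)) : H →L[ℂ] K) -
  (2 : ℂ) • (D (μ • a) : H →L[ℂ] K)

/-- Derivation part of the defect. -/
noncomputable def Taux (𝒜 : Submodule ℂ (H →L[ℂ] K)) (hA : JStarClosed 𝒜) (D : 𝒜 → 𝒜)
    (c : 𝒜) : H →L[ℂ] K :=
  (D (cube 𝒜 hA c) : H →L[ℂ] K) -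
  ((D c : H →L[ℂ] K) ∘L adjoint (c : H →L[ℂ] K)) ∘L (c : H →L[ℂ] K) -
  ((c : H →L[ℂ] K) ∘L adjoint (D c : H →L[ℂ] K)) ∘L (c : H →L[ℂ] K) -
  ((c : H →L[ℂ] K) ∘L adjoint (c : H →L[ℂ] K)) ∘L (D c : H →L[ℂ] K)

lemma defect_split (𝒜 : Submodule ℂ (H →L[ℂ] K)) (hA : JStarClosed 𝒜) (r : ℝ)
    (D : 𝒜 → 𝒜) (μ : ℂ) (a b c : 𝒜) :
    jensenDefect 𝒜 hA r D μ a b c = Jaux 𝒜 r D μ a b + Taux 𝒜 hA D c := by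
  unfold jensenDefect Jaux Taux
  abel

set_option maxHeartbeats 1000000 in
/-- Theorem 2.1 (superstability of `J*`-derivations): if `D(sa) = sD(a)`,
`s⁻ⁿ φ(sⁿa, sⁿb, sⁿc) → 0` and the Jensen/`J*` defect of `D` is controlled by `φ`,
then `D` is a `J*`-derivation. -/
theorem superstability_JStarDerivation
    (𝒜 : Submodule ℂ (H →L[ℂ] K)) (hclosed : IsClosed (𝒜 : Set (H →L[ℂ] K)))
    (hA : JStarClosed 𝒜)
    (r s : ℝ) (hr : 1 < r) (hs : 1 < s)
    (D : 𝒜 → 𝒜) (hDs : ∀ a : 𝒜, D ((s : ℂ) • a) = (s : ℂ) • D a)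
    (φ : 𝒜 → 𝒜 → 𝒜 → ℝ) (hφ0 : ∀ a b c : 𝒜, 0 ≤ φ a b c)
    (hlim : ∀ a b c : 𝒜, Tendsto
      (fun n : ℕ => (s ^ n)⁻¹ * φ (((s : ℂ) ^ n) • a) (((s : ℂ) ^ n) • b) (((s : ℂ) ^ n) • c))
      atTop (nhds 0))
    (hineq : ∀ (μ : ℂ), ‖μ‖ = 1 → ∀ a b c : 𝒜, ‖jensenDefect 𝒜 hA r D μ a b c‖ ≤ φ a b c) :
    IsJStarDerivation 𝒜 hA D := by
  have hs0 : (0:ℝ) < s := lt_trans one_pos hs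
  -- D 0 = 0
  have hD0 : D 0 = 0 := by
    have h := hDs 0
    rw [smul_zero] at h
    have h2 : ((s:ℂ) - 1) • D 0 = 0 := by
      have e : ((s:ℂ) - 1) • D 0 = (s:ℂ) • D 0 - D 0 := by module
      rw [e, ← h, sub_self]
    rcases smul_eq_zero.mp h2 with h' | h'
    · exfalso
      apply sub_ne_zero.mpr _ h'
      simp only [ne_eq, Complex.ofReal_eq_one]
      exact ne_of_gt hs
    · exact h'
  -- D commutes with powers of s
  have hDpow : ∀ (n : ℕ) (x : 𝒜), D ((s:ℂ)^n • x) = (s:ℂ)^n • D x := by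
    intro n
    induction n with
    | zero => intro x; simp
    | succ n ih =>
      intro x
      rw [pow_succ, mul_smul, ih, hDs, mul_smul]
  -- Jaux scales
  have hJscale : ∀ (n : ℕ) (μ : ℂ) (a b : 𝒜),
      Jaux 𝒜 r D μ ((s:ℂ)^n • a) ((s:ℂ)^n • b) = (s:ℂ)^n • Jaux 𝒜 r D μ a b := by
    intro n μ a b
    have e1 : (r:ℂ)⁻¹ • ((s:ℂ)^n • a + (s:ℂ)^n • b) = (s:ℂ)^n • ((r:ℂ)⁻¹ • (a + b)) := by
      module
    have e2 : (r:ℂ)⁻¹ • ((s:ℂ)^n • a - (s:ℂ)^n • b) = (s:ℂ)^n • ((r:ℂ)⁻¹ • (a - b)) := by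
      module
    have e3 : μ • ((s:ℂ)^n • a) = (s:ℂ)^n • (μ • a) := smul_comm _ _ _
    unfold Jaux
    rw [e1, e2, e3, hDpow, hDpow, hDpow, Submodule.coe_smul, Submodule.coe_smul,
      Submodule.coe_smul]
    module
  -- Taux scales
  have hTscale : ∀ (n : ℕ) (c : 𝒜),
      Taux 𝒜 hA D ((s:ℂ)^n • c) = ((s:ℂ)^n)^3 • Taux 𝒜 hA D c := by
    intro n c
    have hstar : starRingEnd ℂ ((s:ℂ)^n) = (s:ℂ)^n := by
      rw [map_pow, Complex.conj_ofReal]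
    unfold Taux
    rw [cube_smul' 𝒜 hA _ hstar, ← pow_mul, hDpow (n*3), hDpow n]
    simp only [Submodule.coe_smul, LinearIsometryEquiv.map_smulₛₗ adjoint, hstar,
      smul_comp, comp_smul, smul_smul]
    rw [pow_mul]
    module
  -- Jaux at zero arguments
  have hJzero_arg : ∀ μ : ℂ, Jaux 𝒜 r D μ 0 0 = 0 := by
    intro μ
    unfold Jaux
    simp [hD0]
  -- Taux at zero
  have hTzero_arg : Taux 𝒜 hA D 0 = 0 := by
    unfold Taux
    rw [cube_zero', hD0]
    simp
  have hsnorm : ∀ n : ℕ, ‖(s:ℂ)^n‖ = s^n := by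
    intro n
    rw [norm_pow, Complex.norm_real, Real.norm_of_nonneg (le_of_lt hs0)]
  have hnsm : ∀ (z : ℂ) (X : H →L[ℂ] K), ‖z • X‖ = ‖z‖ * ‖X‖ := fun z X => norm_smul z X
  -- The Jensen equation holds exactly
  have hJ : ∀ (μ : ℂ), ‖μ‖ = 1 → ∀ a b : 𝒜, Jaux 𝒜 r D μ a b = 0 := by
    intro μ hμ a b
    have hb : ∀ n : ℕ, ‖Jaux 𝒜 r D μ a b‖ ≤
        (s^n)⁻¹ * φ ((s:ℂ)^n • a) ((s:ℂ)^n • b) ((s:ℂ)^n • (0:𝒜)) := by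
      intro n
      have h1 := hineq μ hμ ((s:ℂ)^n • a) ((s:ℂ)^n • b) ((s:ℂ)^n • (0:𝒜))
      rw [defect_split, smul_zero, hTzero_arg, add_zero, hJscale, hnsm, hsnorm] at h1
      rw [smul_zero, le_inv_mul_iff₀ (pow_pos hs0 n)]
      exact h1
    have hle := ge_of_tendsto' (hlim a b 0) hb
    exact norm_le_zero_iff.mp hle
  -- The derivation identity holds exactly
  have hT : ∀ c : 𝒜, Taux 𝒜 hA D c = 0 := by
    intro c
    have hb : ∀ n : ℕ, ‖Taux 𝒜 hA D c‖ ≤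
        (s^n)⁻¹ * φ ((s:ℂ)^n • (0:𝒜)) ((s:ℂ)^n • (0:𝒜)) ((s:ℂ)^n • c) := by
      intro n
      have h1 := hineq 1 (by simp) ((s:ℂ)^n • (0:𝒜)) ((s:ℂ)^n • (0:𝒜)) ((s:ℂ)^n • c)
      rw [defect_split, smul_zero, hJzero_arg, zero_add, hTscale, hnsm, norm_pow,
        hsnorm] at h1
      rw [smul_zero, le_inv_mul_iff₀ (pow_pos hs0 n)]
      have hsn1 : (1:ℝ) ≤ s^n := one_le_pow₀ (le_of_lt hs)
      have hpow : s^n ≤ (s^n)^3 := by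
        nlinarith [mul_nonneg (mul_nonneg (sub_nonneg.mpr hsn1) (le_trans zero_le_one hsn1))
          (by linarith : (0:ℝ) ≤ s^n + 1)]
      calc s^n * ‖Taux 𝒜 hA D c‖ ≤ (s^n)^3 * ‖Taux 𝒜 hA D c‖ :=
            mul_le_mul_of_nonneg_right hpow (norm_nonneg _)
        _ ≤ φ 0 0 ((s:ℂ)^n • c) := h1
    have hle := ge_of_tendsto' (hlim 0 0 c) hb
    exact norm_le_zero_iff.mp hle
  -- the exact Jensen functional equation, in 𝒜
  have feq : ∀ (μ : ℂ), ‖μ‖ = 1 → ∀ a b : 𝒜,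
      ((r:ℂ) * μ) • D ((r:ℂ)⁻¹ • (a + b)) + ((r:ℂ) * μ) • D ((r:ℂ)⁻¹ • (a - b))
        = (2:ℂ) • D (μ • a) := by
    intro μ hμ a b
    have h := hJ μ hμ a b
    unfold Jaux at h
    have h2 := eq_of_sub_eq_zero h
    refine Subtype.ext ?_
    push_cast
    exact h2
  -- r-dilation
  have hDr : ∀ a : 𝒜, (r:ℂ) • D ((r:ℂ)⁻¹ • a) = D a := by
    intro a
    have h := feq 1 (by simp) a 0
    rw [add_zero, sub_zero, mul_one, one_smul,
      ← two_smul ℂ ((r:ℂ) • D ((r:ℂ)⁻¹ • a))] at h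
    exact smul_right_injective _ (two_ne_zero) h
  -- simplified Jensen equation
  have hE2 : ∀ a b : 𝒜, D (a + b) + D (a - b) = (2:ℂ) • D a := by
    intro a b
    have h := feq 1 (by simp) a b
    rw [mul_one, one_smul, hDr, hDr] at h
    exact h
  -- doubling and halving
  have hdouble : ∀ a : 𝒜, D ((2:ℂ) • a) = (2:ℂ) • D a := by
    intro a
    have h := hE2 a a
    rw [sub_self, hD0, add_zero, ← two_smul ℂ a] at h
    exact h
  have hhalf : ∀ a : 𝒜, D ((2⁻¹:ℂ) • a) = (2⁻¹:ℂ) • D a := by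
    intro a
    have h := hdouble ((2⁻¹:ℂ) • a)
    rw [smul_smul, mul_inv_cancel₀ (two_ne_zero), one_smul] at h
    rw [h, smul_smul, inv_mul_cancel₀ (two_ne_zero), one_smul]
  -- additivity
  have hadd : ∀ u v : 𝒜, D (u + v) = D u + D v := by
    intro u v
    have h := hE2 ((2⁻¹:ℂ) • (u + v)) ((2⁻¹:ℂ) • (u - v))
    have e1 : (2⁻¹:ℂ) • (u + v) + (2⁻¹:ℂ) • (u - v) = u := by module
    have e2 : (2⁻¹:ℂ) • (u + v) - (2⁻¹:ℂ) • (u - v) = v := by module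
    rw [e1, e2, hhalf, smul_smul, mul_inv_cancel₀ (two_ne_zero), one_smul] at h
    exact h.symm
  -- unit-circle homogeneity
  have hunit : ∀ (μ : ℂ), ‖μ‖ = 1 → ∀ a : 𝒜, D (μ • a) = μ • D a := by
    intro μ hμ a
    have h := feq μ hμ a 0
    rw [add_zero, sub_zero,
      ← two_smul ℂ (((r:ℂ) * μ) • D ((r:ℂ)⁻¹ • a))] at h
    have h2 := smul_right_injective _ (two_ne_zero) h
    rw [← h2, mul_comm, mul_smul, hDr]
  -- natural-number homogeneity
  have hnat : ∀ (n : ℕ) (a : 𝒜), D ((n:ℂ) • a) = (n:ℂ) • D a := by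
    intro n
    induction n with
    | zero => intro a; simp [hD0]
    | succ n ih =>
      intro a
      have e : ((n+1 : ℕ):ℂ) • a = (n:ℂ) • a + a := by
        push_cast
        rw [add_smul, one_smul]
      rw [e, hadd, ih]
      push_cast
      rw [add_smul, one_smul]
  -- real homogeneity for |t| ≤ 1
  have hreal1 : ∀ (t : ℝ), |t| ≤ 1 → ∀ a : 𝒜, D ((t:ℂ) • a) = (t:ℂ) • D a := by
    intro t ht a
    set y : ℝ := Real.sqrt (1 - t^2) with hy
    set μ : ℂ := (t:ℂ) + (y:ℂ) * Complex.I with hμdef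
    have ht2 : t^2 ≤ 1 := by
      have h := abs_le.mp ht
      nlinarith
    have hynn : (0:ℝ) ≤ 1 - t^2 := by linarith
    have hμnorm : ‖μ‖ = 1 := by
      rw [hμdef, Complex.norm_add_mul_I, hy,
        Real.sq_sqrt hynn]
      simp
    have hconj : starRingEnd ℂ μ = (t:ℂ) - (y:ℂ) * Complex.I := by
      rw [hμdef, map_add, map_mul, Complex.conj_ofReal, Complex.conj_ofReal,
        Complex.conj_I]
      ring
    have hconjnorm : ‖starRingEnd ℂ μ‖ = 1 := by
      rw [RCLike.norm_conj, hμnorm]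
    have hsum : μ + starRingEnd ℂ μ = 2 * (t:ℂ) := by
      rw [hconj, hμdef]
      ring
    have e : (t:ℂ) • a = (2⁻¹:ℂ) • (μ • a + (starRingEnd ℂ μ) • a) := by
      rw [← add_smul, hsum, smul_smul]
      congr 1
      ring
    rw [e, hhalf, hadd, hunit μ hμnorm, hunit _ hconjnorm, ← add_smul, hsum, smul_smul]
    congr 1
    ring
  -- full real homogeneity
  have hreal : ∀ (t : ℝ) (a : 𝒜), D ((t:ℂ) • a) = (t:ℂ) • D a := by
    intro t a
    set n : ℕ := ⌈|t|⌉₊ + 1 with hn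
    have hn0 : (0:ℝ) < (n:ℝ) := by positivity
    have hle : |t / (n:ℝ)| ≤ 1 := by
      rw [abs_div, abs_of_pos hn0, div_le_one hn0]
      calc |t| ≤ (⌈|t|⌉₊ : ℝ) := Nat.le_ceil _
        _ ≤ (n:ℝ) := by rw [hn]; push_cast; linarith
    have hne : ((n:ℕ):ℝ) ≠ 0 := ne_of_gt hn0
    have htEq : ((n:ℕ):ℝ) * (t / (n:ℝ)) = t := by field_simp
    have hcast : ((n:ℕ):ℂ) = (((n:ℕ):ℝ):ℂ) := by push_cast; ring
    have e : (t:ℂ) • a = ((n:ℕ):ℂ) • (((t / (n:ℝ) : ℝ):ℂ) • a) := by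
      rw [smul_smul]
      congr 1
      rw [hcast, ← Complex.ofReal_mul, htEq]
    rw [e, hnat, hreal1 _ hle, smul_smul, hcast, ← Complex.ofReal_mul, htEq]
  -- full complex homogeneity
  have hC : ∀ (z : ℂ) (a : 𝒜), D (z • a) = z • D a := by
    intro z a
    rcases eq_or_ne z 0 with hz | hz
    · rw [hz, zero_smul, hD0, zero_smul]
    · have hz' : (‖z‖:ℝ) ≠ 0 := norm_ne_zero_iff.mpr hz
      set w : ℂ := (‖z‖:ℂ)⁻¹ * z with hw
      have hwnorm : ‖w‖ = 1 := by
        rw [hw, norm_mul, norm_inv, Complex.norm_real,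
          Real.norm_of_nonneg (norm_nonneg z), inv_mul_cancel₀ hz']
      have hzw : ((‖z‖:ℝ):ℂ) * w = z := by
        rw [hw, ← mul_assoc, mul_inv_cancel₀ (Complex.ofReal_ne_zero.mpr hz'), one_mul]
      have e : z • a = ((‖z‖:ℝ):ℂ) • (w • a) := by
        rw [smul_smul, hzw]
      rw [e, hreal, hunit w hwnorm, smul_smul, hzw]
  refine ⟨fun a b => hadd a b, hC, fun c => ?_⟩
  have h := hT c
  unfold Taux at h
  have h2 : (D (cube 𝒜 hA c) : H →L[ℂ] K) -
      (((D c : H →L[ℂ] K) ∘L adjoint (c : H →L[ℂ] K)) ∘L (c : H →L[ℂ] K) +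
       ((c : H →L[ℂ] K) ∘L adjoint (D c : H →L[ℂ] K)) ∘L (c : H →L[ℂ] K) +
       ((c : H →L[ℂ] K) ∘L adjoint (c : H →L[ℂ] K)) ∘L (D c : H →L[ℂ] K)) = 0 := by
    rw [← h]
    abel
  exact sub_eq_zero.mp h2
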